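/- For the Lie algebra $A_2 = \mathfrak{sl}_3$, the number of distinct weights of the finite-dimensional irreducible module with highest weight $\lambda = \lambda_1\omega_1 + \lambda_2\omega_2$ (with $\lambda_1, \lambda_2 \in \mathbb{N}_0$) equals $1 + \tfrac{3}{2}(\lambda_1+\lambda_2) + \tfrac{1}{2}(\lambda_1^2 + \lambda_2^2 + 4\lambda_1\lambda_2)$. -/

import Mathlib

/-- The simple root `α_i`, written in fundamental-weight (Dynkin-label) coordinates:
its `j`-th Dynkin label is the Cartan matrix entry `A_{ji} = ⟨α_j^∨, α_i⟩`. -/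
def colRoot {r : ℕ} (A : Fin r → Fin r → ℤ) (i : Fin r) : Fin r → ℤ := fun j => A j i

/-- The simple reflection `s_i` on the weight lattice: `s_i(μ) = μ - μ_i α_i`. -/
def simpleRefl {r : ℕ} (A : Fin r → Fin r → ℤ) (i : Fin r) :
    (Fin r → ℤ) → (Fin r → ℤ) :=
  fun μ => μ - μ i • colRoot A i

/-- The Weyl group of the Cartan matrix `A`, realized as the monoid of maps of the weight
lattice generated by the simple reflections (for a finite Weyl group, which consists of
involutions, this closure coincides with the generated group). -/
def weylMonoid {r : ℕ} (A : Fin r → Fin r → ℤ) : Submonoid (Function.End (Fin r → ℤ)) :=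
  Submonoid.closure (Set.range (simpleRefl A))

/-- `μ ≤ λ` in the dominance (root) order: `λ - μ` is a non-negative integer combination
of the simple roots. -/
def rootLE {r : ℕ} (A : Fin r → Fin r → ℤ) (μ lam : Fin r → ℤ) : Prop :=
  ∃ n : Fin r → ℕ, lam = μ + ∑ i, (n i : ℤ) • colRoot A i

/-- The set `P(λ)` of distinct weights of the finite-dimensional irreducible
highest-weight module `L(λ)`: by the classical saturation theorem, for dominant integral
`λ` these are exactly the integral weights `μ` all of whose Weyl conjugates satisfy
`w(μ) ≤ λ` in the dominance order. -/
def weightSet {r : ℕ} (A : Fin r → Fin r → ℤ) (lam : Fin r → ℤ) : Set (Fin r → ℤ) :=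
  {μ | ∀ w ∈ weylMonoid A, rootLE A (w μ) lam}

/-- The Cartan matrix of `A₂ = 𝔰𝔩₃`. -/
def cartanA2 : Fin 2 → Fin 2 → ℤ := ![![2, -1], ![-1, 2]]

/- ### Auxiliary development -/

open Finset

/-- The hexagon-with-congruence condition characterizing the weights of `L(l1 ω₁ + l2 ω₂)`. -/
def A2Cond (l1 l2 : ℕ) (m1 m2 : ℤ) : Prop :=
  2*m1+m2 ≤ 2*l1+l2 ∧ m2-m1 ≤ 2*l1+l2 ∧ -m1-2*m2 ≤ 2*l1+l2 ∧
  m1+2*m2 ≤ l1+2*l2 ∧ m1-m2 ≤ l1+2*l2 ∧ -2*m1-m2 ≤ l1+2*l2 ∧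
  (m1 - m2) % 3 = ((l1 : ℤ) - l2) % 3

lemma simpleReflA2_apply (i : Fin 2) (μ : Fin 2 → ℤ) (j : Fin 2) :
    simpleRefl cartanA2 i μ j = μ j - μ i * cartanA2 j i := by
  simp [simpleRefl, colRoot]

lemma reflA2_zero_apply (μ : Fin 2 → ℤ) :
    simpleRefl cartanA2 0 μ 0 = -(μ 0) ∧ simpleRefl cartanA2 0 μ 1 = μ 1 + μ 0 := by
  constructor <;> (rw [simpleReflA2_apply]; simp [cartanA2]; try ring)

lemma reflA2_one_apply (μ : Fin 2 → ℤ) :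
    simpleRefl cartanA2 1 μ 0 = μ 0 + μ 1 ∧ simpleRefl cartanA2 1 μ 1 = -(μ 1) := by
  constructor <;> (rw [simpleReflA2_apply]; simp [cartanA2]; try ring)

lemma A2Cond_invariant (l1 l2 : ℕ) (i : Fin 2) (μ : Fin 2 → ℤ)
    (h : A2Cond l1 l2 (μ 0) (μ 1)) :
    A2Cond l1 l2 (simpleRefl cartanA2 i μ 0) (simpleRefl cartanA2 i μ 1) := by
  fin_cases i
  · obtain ⟨h0, h1⟩ := reflA2_zero_apply μ
    rw [show (⟨0, by norm_num⟩ : Fin 2) = 0 from rfl, h0, h1]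
    unfold A2Cond at h ⊢; omega
  · obtain ⟨h0, h1⟩ := reflA2_one_apply μ
    rw [show (⟨1, by norm_num⟩ : Fin 2) = 1 from rfl, h0, h1]
    unfold A2Cond at h ⊢; omega

lemma A2Cond_rootLE (l1 l2 : ℕ) (μ : Fin 2 → ℤ) (h : A2Cond l1 l2 (μ 0) (μ 1)) :
    rootLE cartanA2 μ ![(l1 : ℤ), (l2 : ℤ)] := by
  unfold A2Cond at h
  obtain ⟨a, b, ha, hb, e1, e2⟩ :
      ∃ a b : ℤ, 0 ≤ a ∧ 0 ≤ b ∧ (l1 : ℤ) = μ 0 + 2*a - b ∧ (l2 : ℤ) = μ 1 - a + 2*b :=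
    ⟨(2*((l1:ℤ) - μ 0) + ((l2:ℤ) - μ 1))/3, (((l1:ℤ) - μ 0) + 2*((l2:ℤ) - μ 1))/3, by omega⟩
  refine ⟨![a.toNat, b.toNat], ?_⟩
  funext j
  fin_cases j <;>
    (simp [Fin.sum_univ_two, colRoot, cartanA2, Int.toNat_of_nonneg ha,
      Int.toNat_of_nonneg hb]; omega)

lemma A2_weyl_preserves (l1 l2 : ℕ) (w : Function.End (Fin 2 → ℤ))
    (hw : w ∈ weylMonoid cartanA2) :
    ∀ μ : Fin 2 → ℤ, A2Cond l1 l2 (μ 0) (μ 1) → A2Cond l1 l2 (w μ 0) (w μ 1) := by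
  induction hw using Submonoid.closure_induction with
  | mem x hx =>
      obtain ⟨i, rfl⟩ := hx
      exact fun μ h => A2Cond_invariant l1 l2 i μ h
  | one => exact fun μ h => h
  | mul x y hx hy ihx ihy =>
      intro μ h
      exact ihx (y μ) (ihy μ h)

lemma A2Cond_mem_weightSet (l1 l2 : ℕ) (μ : Fin 2 → ℤ) (h : A2Cond l1 l2 (μ 0) (μ 1)) :
    μ ∈ weightSet cartanA2 ![(l1 : ℤ), (l2 : ℤ)] := by
  intro w hw
  exact A2Cond_rootLE l1 l2 (w μ) (A2_weyl_preserves l1 l2 w hw μ h)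

lemma A2_rootLE_components (l1 l2 : ℕ) (ν : Fin 2 → ℤ)
    (h : rootLE cartanA2 ν ![(l1 : ℤ), (l2 : ℤ)]) :
    ∃ a b : ℤ, 0 ≤ a ∧ 0 ≤ b ∧ (l1 : ℤ) = ν 0 + 2*a - b ∧ (l2 : ℤ) = ν 1 - a + 2*b := by
  obtain ⟨n, hn⟩ := h
  have h0 := congrFun hn 0
  have h1 := congrFun hn 1
  simp [Fin.sum_univ_two, colRoot, cartanA2] at h0 h1
  exact ⟨n 0, n 1, Int.natCast_nonneg _, Int.natCast_nonneg _, by linarith, by linarith⟩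

lemma A2_weightSet_cond (l1 l2 : ℕ) (μ : Fin 2 → ℤ)
    (h : μ ∈ weightSet cartanA2 ![(l1 : ℤ), (l2 : ℤ)]) : A2Cond l1 l2 (μ 0) (μ 1) := by
  have hs : ∀ i : Fin 2, simpleRefl cartanA2 i ∈ weylMonoid cartanA2 :=
    fun i => Submonoid.subset_closure ⟨i, rfl⟩
  obtain ⟨a0, b0, ha0, hb0, e01, e02⟩ := A2_rootLE_components l1 l2 _ (h 1 (one_mem _))
  obtain ⟨a1, b1, ha1, hb1, e11, e12⟩ := A2_rootLE_components l1 l2 _ (h _ (hs 0))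
  obtain ⟨a2, b2, ha2, hb2, e21, e22⟩ := A2_rootLE_components l1 l2 _ (h _ (hs 1))
  obtain ⟨a3, b3, ha3, hb3, e31, e32⟩ :=
    A2_rootLE_components l1 l2 _ (h _ (mul_mem (hs 0) (hs 1)))
  obtain ⟨a4, b4, ha4, hb4, e41, e42⟩ :=
    A2_rootLE_components l1 l2 _ (h _ (mul_mem (hs 1) (hs 0)))
  have c1 : ((1 : Function.End (Fin 2 → ℤ)) μ) = μ := rfl
  rw [c1] at e01 e02
  have r00 := (reflA2_zero_apply μ).1; have r01 := (reflA2_zero_apply μ).2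
  have r10 := (reflA2_one_apply μ).1; have r11 := (reflA2_one_apply μ).2
  rw [r00] at e11; rw [r01] at e12
  rw [r10] at e21; rw [r11] at e22
  change (l1 : ℤ) = simpleRefl cartanA2 0 (simpleRefl cartanA2 1 μ) 0 + 2 * a3 - b3 at e31
  change (l2 : ℤ) = simpleRefl cartanA2 0 (simpleRefl cartanA2 1 μ) 1 - a3 + 2 * b3 at e32
  change (l1 : ℤ) = simpleRefl cartanA2 1 (simpleRefl cartanA2 0 μ) 0 + 2 * a4 - b4 at e41
  change (l2 : ℤ) = simpleRefl cartanA2 1 (simpleRefl cartanA2 0 μ) 1 - a4 + 2 * b4 at e42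
  rw [(reflA2_zero_apply _).1, r10] at e31
  rw [(reflA2_zero_apply _).2, r10, r11] at e32
  rw [(reflA2_one_apply _).1, r00, r01] at e41
  rw [(reflA2_one_apply _).2, r01] at e42
  clear h hs c1 r00 r01 r10 r11
  unfold A2Cond
  omega

/-- The hexagon finset in `(ℕ × ℕ)` coordinates `(a,b)` where `μ = λ - a α₁ - b α₂`. -/
def hexFinset (l1 l2 : ℕ) : Finset (ℕ × ℕ) :=
  ((range (l1+l2+1)) ×ˢ (range (l1+l2+1))).filter
    (fun p => p.1 ≤ l1 + p.2 ∧ p.2 ≤ l2 + p.1)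

lemma hex_card_mul_two (l1 l2 : ℕ) :
    (hexFinset l1 l2).card * 2 = 2 + 3*(l1+l2) + l1^2 + l2^2 + 4*l1*l2 := by
  classical
  set N := l1 + l2 with hN
  have hfib : ∀ p ∈ hexFinset l1 l2, p.1 ∈ range (N+1) := by
    intro p hp
    simp only [hexFinset, mem_filter, mem_product, mem_range] at hp
    simp only [mem_range]
    omega
  have hcard := Finset.card_eq_sum_card_fiberwise hfib
  have hfibeq : ∀ a ∈ range (N+1),
      ((hexFinset l1 l2).filter (fun p => p.1 = a)).card
        = min N (a+l2) + 1 - (a - l1) := by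
    intro a ha
    have : ((hexFinset l1 l2).filter (fun p => p.1 = a))
        = ({a} : Finset ℕ) ×ˢ (Icc (a - l1) (min N (a+l2))) := by
      ext p
      simp only [hexFinset, mem_filter, mem_product, mem_range, mem_singleton, mem_Icc,
        Finset.mem_product, Finset.mem_singleton]
      constructor
      · rintro ⟨⟨⟨h1, h2⟩, h3, h4⟩, h5⟩; omega
      · rintro ⟨h1, h2, h3⟩
        simp only [mem_range] at ha
        omega
    rw [this, Finset.card_product, Finset.card_singleton, Nat.card_Icc, one_mul]
  rw [hcard, Finset.sum_congr rfl hfibeq]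
  have hsplit : range (N+1) = Ico 0 (N+1) := by rw [Finset.range_eq_Ico]
  have h2 : ∑ a ∈ range (N+1), (min N (a+l2) + 1 - (a - l1))
      = (∑ a ∈ Ico 0 (l1+1), (min N (a+l2) + 1 - (a - l1)))
        + ∑ a ∈ Ico (l1+1) (N+1), (min N (a+l2) + 1 - (a - l1)) := by
    rw [hsplit, Finset.sum_Ico_consecutive _ (by omega) (by omega)]
  rw [h2]
  have hA : (∑ a ∈ Ico 0 (l1+1), (min N (a+l2) + 1 - (a - l1)))
      = (∑ a ∈ range (l1+1), a) + (l1+1)*(l2+1) := by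
    rw [← Finset.range_eq_Ico]
    have : ∀ a ∈ range (l1+1), (min N (a+l2) + 1 - (a - l1)) = a + (l2+1) := by
      intro a ha; simp only [mem_range] at ha; omega
    rw [Finset.sum_congr rfl this, Finset.sum_add_distrib, Finset.sum_const, card_range,
      smul_eq_mul]
  have hB : (∑ a ∈ Ico (l1+1) (N+1), (min N (a+l2) + 1 - (a - l1)))
      = l2 * l1 + ((∑ j ∈ range l2, j) + l2) := by
    rw [Finset.sum_Ico_eq_sum_range]
    have hlen : N + 1 - (l1+1) = l2 := by omega
    rw [hlen]
    have : ∀ i ∈ range l2, (min N (l1+1+i+l2) + 1 - (l1+1+i - l1)) = l1 + (l2 - i) := by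
      intro i hi; simp only [mem_range] at hi; omega
    rw [Finset.sum_congr rfl this, Finset.sum_add_distrib, Finset.sum_const, card_range,
      smul_eq_mul]
    congr 1
    have := Finset.sum_range_reflect (fun j => j + 1) l2
    have heq : ∀ j ∈ range l2, (l2 - j) = (l2 - 1 - j) + 1 := by
      intro j hj; simp only [mem_range] at hj; omega
    rw [Finset.sum_congr rfl heq, this, Finset.sum_add_distrib, Finset.sum_const, card_range,
      smul_eq_mul, mul_one]
  rw [hA, hB]
  have g1 := Finset.sum_range_id_mul_two (l1+1)
  have g2 := Finset.sum_range_id_mul_two (l2+1)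
  rw [Finset.sum_range_succ] at g2
  set G1 := ∑ a ∈ range (l1+1), a
  set G2 := ∑ j ∈ range l2, j
  simp only [Nat.add_sub_cancel] at g1 g2
  zify at g1 g2 ⊢
  have hN' : (N:ℤ) = l1 + l2 := by rw [hN]; push_cast; ring
  linear_combination g1 + g2 - 3 * hN'

/-- The embedding of hexagon coordinates into the weight lattice. -/
def hexEmb (l1 l2 : ℕ) (p : ℕ × ℕ) : Fin 2 → ℤ :=
  ![(l1 : ℤ) - 2*p.1 + p.2, (l2 : ℤ) + p.1 - 2*p.2]

lemma hexEmb_injective (l1 l2 : ℕ) : Function.Injective (hexEmb l1 l2) := by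
  rintro ⟨a, b⟩ ⟨c, d⟩ h
  have h0 := congrFun h 0
  have h1 := congrFun h 1
  simp only [hexEmb, Matrix.cons_val_zero, Matrix.cons_val_one, Matrix.head_cons] at h0 h1
  have : a = c ∧ b = d := by omega
  simp [this.1, this.2]

lemma A2_weightSet_eq (l1 l2 : ℕ) :
    weightSet cartanA2 ![(l1 : ℤ), (l2 : ℤ)]
      = ↑((hexFinset l1 l2).image (hexEmb l1 l2)) := by
  ext μ
  simp only [Finset.coe_image, Set.mem_image, Finset.mem_coe]
  constructor
  · intro h
    have hc := A2_weightSet_cond l1 l2 μ h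
    unfold A2Cond at hc
    obtain ⟨a, b, ha, hb, e1, e2⟩ :
        ∃ a b : ℤ, 0 ≤ a ∧ 0 ≤ b ∧ (l1 : ℤ) = μ 0 + 2*a - b ∧ (l2 : ℤ) = μ 1 - a + 2*b :=
      ⟨(2*((l1:ℤ) - μ 0) + ((l2:ℤ) - μ 1))/3, (((l1:ℤ) - μ 0) + 2*((l2:ℤ) - μ 1))/3, by omega⟩
    refine ⟨(a.toNat, b.toNat), ?_, ?_⟩
    · simp only [hexFinset, mem_filter, mem_product, mem_range]
      omega
    · funext j
      fin_cases j <;>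
        (simp [hexEmb, Int.toNat_of_nonneg ha, Int.toNat_of_nonneg hb]; omega)
  · rintro ⟨⟨a, b⟩, hp, rfl⟩
    simp only [hexFinset, mem_filter, mem_product, mem_range] at hp
    apply A2Cond_mem_weightSet
    simp only [hexEmb, Matrix.cons_val_zero, Matrix.cons_val_one, Matrix.head_cons]
    unfold A2Cond
    omega

/-- for `A₂ = 𝔰𝔩₃`, the number of distinct weights of the irreducible module
`L(λ₁ω₁ + λ₂ω₂)` (with `λ₁, λ₂ ∈ ℕ`) equals
`1 + (3/2)(λ₁+λ₂) + ½(λ₁² + λ₂² + 4λ₁λ₂)`. -/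
theorem stmt_2 (l1 l2 : ℕ) :
    ((weightSet cartanA2 ![(l1 : ℤ), (l2 : ℤ)]).ncard : ℚ)
      = 1 + (3/2) * ((l1 : ℚ) + l2) + (1/2) * ((l1 : ℚ)^2 + (l2 : ℚ)^2 + 4 * l1 * l2) := by
  rw [A2_weightSet_eq, Set.ncard_coe_finset,
    Finset.card_image_of_injective _ (hexEmb_injective l1 l2)]
  have h := hex_card_mul_two l1 l2
  have h' : ((hexFinset l1 l2).card : ℚ) * 2
      = 2 + 3*((l1:ℚ)+l2) + (l1:ℚ)^2 + (l2:ℚ)^2 + 4*l1*l2 := by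
    exact_mod_cast congrArg (Nat.cast : ℕ → ℚ) h
  linarith
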